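/- With N = (Z M Zᵀ)⁻¹ Z M, the extended mobility end-point tensor Λ̄ = (J̄ M⁻¹ J̄ᵀ)⁻¹ is block diagonal: the off-diagonal block vanishes, J M⁻¹ Nᵀ = 0, and Λ̄ = blockdiag(Λ_t, Λ_ν) with Λ_t = (J M⁻¹ Jᵀ)⁻¹ and Λ_ν = (N M⁻¹ Nᵀ)⁻¹ = Z M Zᵀ. -/

import Mathlib

open Matrix

lemma aux_transpose_mulVec_ne_zero {n m : ℕ} (B : Matrix (Fin m) (Fin n) ℝ)
    (hB : B.rank = m) {x : Fin m → ℝ} (hx : x ≠ 0) : Bᵀ *ᵥ x ≠ 0 := by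
  have hli : LinearIndependent ℝ (fun i ↦ B i) := by
    rw [linearIndependent_iff_card_eq_finrank_span]
    rw [B.rank_eq_finrank_span_row] at hB
    rw [Fintype.card_fin]; exact hB.symm
  have hinj : Function.Injective B.vecMul := Matrix.vecMul_injective_iff.mpr hli
  intro h
  rw [Matrix.mulVec_transpose] at h
  exact hx (hinj (show x ᵥ* B = 0 ᵥ* B by rw [Matrix.zero_vecMul]; exact h))

lemma aux_posdef {n m : ℕ} (M : Matrix (Fin n) (Fin n) ℝ) (hM : M.PosDef)
    (B : Matrix (Fin m) (Fin n) ℝ) (hB : B.rank = m) : (B * M * Bᵀ).PosDef := by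
  rw [posDef_iff_dotProduct_mulVec]
  constructor
  · have hMh : Mᵀ = M := hM.isHermitian
    show (B * M * Bᵀ)ᵀ = _
    rw [transpose_mul, transpose_mul, transpose_transpose, hMh, Matrix.mul_assoc]
  · intro x hx
    have hy : Bᵀ *ᵥ x ≠ 0 := aux_transpose_mulVec_ne_zero B hB hx
    have h0 := hM.dotProduct_mulVec_pos hy
    have key : star x ⬝ᵥ ((B * M * Bᵀ) *ᵥ x) = star (Bᵀ *ᵥ x) ⬝ᵥ (M *ᵥ (Bᵀ *ᵥ x)) := by
      rw [Matrix.mul_assoc, ← Matrix.mulVec_mulVec]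
      simp only [star_trivial]
      rw [Matrix.dotProduct_mulVec, ← Matrix.mulVec_transpose, ← Matrix.mulVec_mulVec]
    rw [key]
    exact h0

/-- With `N = (Z M Zᵀ)⁻¹ Z M` and `J̄ = [J; N]` the extended
Jacobian, the extended mobility end-point tensor `Λ̄ = (J̄ M⁻¹ J̄ᵀ)⁻¹` is block
diagonal: `J M⁻¹ Nᵀ = 0` and `Λ̄ = blockdiag (Λ_t, Λ_ν)` with
`Λ_t = (J M⁻¹ Jᵀ)⁻¹` and `Λ_ν = (N M⁻¹ Nᵀ)⁻¹ = Z M Zᵀ`. -/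
theorem extended_mobility_tensor_block_diagonal
    {n m : ℕ} (hmn : m ≤ n)
    (M : Matrix (Fin n) (Fin n) ℝ) (J : Matrix (Fin m) (Fin n) ℝ)
    (Z : Matrix (Fin (n - m)) (Fin n) ℝ)
    (hM : M.PosDef) (hJ : J.rank = m)
    (hZ : Z.rank = n - m) (hJZ : J * Zᵀ = 0) :
    J * M⁻¹ * ((Z * M * Zᵀ)⁻¹ * Z * M)ᵀ = 0 ∧
    ((fromRows J ((Z * M * Zᵀ)⁻¹ * Z * M)) * M⁻¹ *
        (fromRows J ((Z * M * Zᵀ)⁻¹ * Z * M))ᵀ)⁻¹ =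
      fromBlocks ((J * M⁻¹ * Jᵀ)⁻¹) 0 0
        ((((Z * M * Zᵀ)⁻¹ * Z * M) * M⁻¹ * ((Z * M * Zᵀ)⁻¹ * Z * M)ᵀ)⁻¹) ∧
    (((Z * M * Zᵀ)⁻¹ * Z * M) * M⁻¹ * ((Z * M * Zᵀ)⁻¹ * Z * M)ᵀ)⁻¹ =
        Z * M * Zᵀ := by
  set A := Z * M * Zᵀ with hA
  set N := A⁻¹ * Z * M with hN
  have hMh : Mᵀ = M := hM.isHermitian
  have hMu : IsUnit M := hM.isUnit
  have hApd : A.PosDef := aux_posdef M hM Z hZ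
  have hAu : IsUnit A := hApd.isUnit
  have hAh : Aᵀ = A := hApd.isHermitian
  have hAinvh : (A⁻¹)ᵀ = A⁻¹ := by rw [transpose_nonsing_inv, hAh]
  have hMM : M⁻¹ * M = 1 := nonsing_inv_mul M (isUnit_iff_isUnit_det _ |>.1 hMu)
  have hMM' : M * M⁻¹ = 1 := mul_nonsing_inv M (isUnit_iff_isUnit_det _ |>.1 hMu)
  have hAA : A⁻¹ * A = 1 := nonsing_inv_mul A (isUnit_iff_isUnit_det _ |>.1 hAu)
  have hNt : Nᵀ = M * Zᵀ * A⁻¹ := by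
    rw [hN, transpose_mul, transpose_mul, hMh, hAinvh, Matrix.mul_assoc]
  have hZJ : Z * Jᵀ = 0 := by
    have := congrArg transpose hJZ
    simpa using this
  have h1 : J * M⁻¹ * Nᵀ = 0 := by
    rw [hNt]
    have e : J * M⁻¹ * (M * Zᵀ * A⁻¹) = J * (M⁻¹ * M) * (Zᵀ * A⁻¹) := by
      simp only [Matrix.mul_assoc]
    rw [e, hMM, Matrix.mul_one, ← Matrix.mul_assoc, hJZ, Matrix.zero_mul]
  have h2 : N * M⁻¹ * Nᵀ = A⁻¹ := by
    rw [hNt, hN]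
    have e : A⁻¹ * Z * M * M⁻¹ * (M * Zᵀ * A⁻¹) = A⁻¹ * (Z * (M * (M⁻¹ * M)) * Zᵀ) * A⁻¹ := by
      simp only [Matrix.mul_assoc]
    rw [e, hMM, Matrix.mul_one, ← hA, hAA, Matrix.one_mul]
  have h3 : N * M⁻¹ * Jᵀ = 0 := by
    rw [hN]
    have e : A⁻¹ * Z * M * M⁻¹ * Jᵀ = A⁻¹ * (Z * ((M * M⁻¹) * Jᵀ)) := by
      simp only [Matrix.mul_assoc]
    rw [e, hMM', Matrix.one_mul, ← Matrix.mul_assoc, Matrix.mul_assoc, hZJ, Matrix.mul_zero]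
  have hJpd : (J * M⁻¹ * Jᵀ).PosDef := aux_posdef M⁻¹ hM.inv J hJ
  have hblock : (fromRows J N) * M⁻¹ * (fromRows J N)ᵀ =
      fromBlocks (J * M⁻¹ * Jᵀ) 0 0 (N * M⁻¹ * Nᵀ) := by
    rw [transpose_fromRows, fromRows_mul, fromRows_mul_fromCols, h1, h3]
  refine ⟨h1, ?_, ?_⟩
  · rw [hblock]
    rw [inv_fromBlocks_zero₂₁_of_isUnit_iff _ _ _
      (iff_of_true hJpd.isUnit (by rw [h2]; exact hApd.inv.isUnit))]
    simp
  · rw [h2, Matrix.nonsing_inv_nonsing_inv A (isUnit_iff_isUnit_det _ |>.1 hAu)]
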